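/- (Marginal posterior of one player's type is unaffected by another player's strategy.) In the dynamic game with conditionally independent Markovian types, for any two strategy profiles g and ĝ that agree on player j's strategy (g^j = ĝ^j), and any public history a_{1:t-1} with positive probability under both, the conditional distribution of player j's type history coincides: P^g(x_{1:t}^j | a_{1:t-1}) = P^{ĝ}(x_{1:t}^j | a_{1:t-1}). In particular, a unilateral deviation by player i ≠ j does not alter the common belief about player j's type given the realized public history. -/

import Mathlib

open scoped Classical BigOperators

noncomputable section

namespace DynGame

variable (N T : ℕ) (X A : Fin N → Type)
  [∀ i, Fintype (X i)] [∀ i, Fintype (A i)]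

/-- A (behavioral) strategy profile: player `i` at time `t` sees the public action
history and its own private type history and randomizes over its actions. -/
abbrev Strat := ∀ i : Fin N, Fin T → (Fin T → ∀ j, A j) → (Fin T → X i) → A i → ℝ

/-- Probability of a full trajectory `(x_{1:T}, a_{1:T})` under the prior `Q1`,
the conditionally independent controlled Markov kernels `Qk` and the profile `g`. -/
def trajP (Q1 : ∀ i, X i → ℝ)
    (Qk : ∀ i, Fin T → X i → (∀ j, A j) → X i → ℝ)
    (g : Strat N T X A)
    (x : Fin T → ∀ i, X i) (a : Fin T → ∀ i, A i) : ℝ :=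
  (if h : 0 < T then ∏ i, Q1 i (x ⟨0, h⟩ i) else 1) *
  ∏ t : Fin T,
    ((∏ i, g i t a (fun s => x s i) (a t i)) *
     ∏ i, (if h : (t : ℕ) + 1 < T then
              Qk i ⟨(t : ℕ) + 1, h⟩ (x t i) (a t) (x ⟨(t : ℕ) + 1, h⟩ i) else 1))

/-- Causality: the strategy depends only on the strict past of public actions and the
past (including present) of the player's own types. -/
def Causal (g : Strat N T X A) : Prop :=
  ∀ i (t : Fin T) a a' xi xi',
    (∀ s : Fin T, (s : ℕ) < (t : ℕ) → a s = a' s) →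
    (∀ s : Fin T, (s : ℕ) ≤ (t : ℕ) → xi s = xi' s) →
    g i t a xi = g i t a' xi'

/-- The strategy profile is made of probability distributions. -/
def Stochastic (g : Strat N T X A) : Prop :=
  ∀ i t a xi, (∀ b, 0 ≤ g i t a xi b) ∧ (∑ b, g i t a xi b) = 1

def StochKer (Q1 : ∀ i, X i → ℝ) (Qk : ∀ i, Fin T → X i → (∀ j, A j) → X i → ℝ) : Prop :=
  (∀ i, (∀ x, 0 ≤ Q1 i x) ∧ (∑ x, Q1 i x) = 1) ∧
  (∀ i t x a, (∀ x', 0 ≤ Qk i t x a x') ∧ (∑ x', Qk i t x a x') = 1)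

variable (Q1 : ∀ i, X i → ℝ) (Qk : ∀ i, Fin T → X i → (∀ j, A j) → X i → ℝ)

/-- Marginal probability of the public action history `a_{1:t-1}`
(indices `s` with `s+1 ≤ t-1 <-> s+1 < t` in 0-based time). -/
def aMarg (g : Strat N T X A) (t : ℕ) (a : Fin T → ∀ i, A i) : ℝ :=
  ∑ x' : Fin T → ∀ i, X i, ∑ a' : Fin T → ∀ i, A i,
    if (∀ s : Fin T, (s : ℕ) + 1 < t → a' s = a s) then trajP N T X A Q1 Qk g x' a' else 0

/-- Joint probability of `(x_{1:t}, a_{1:t-1})`. -/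
def xaMarg (g : Strat N T X A) (t : ℕ) (x : Fin T → ∀ i, X i) (a : Fin T → ∀ i, A i) : ℝ :=
  ∑ x' : Fin T → ∀ i, X i, ∑ a' : Fin T → ∀ i, A i,
    if (∀ s : Fin T, (s : ℕ) + 1 < t → a' s = a s) ∧ (∀ s : Fin T, (s : ℕ) < t → x' s = x s)
    then trajP N T X A Q1 Qk g x' a' else 0

/-- Joint conditional `P^g(x_{1:t} | a_{1:t-1})`. -/
def condJoint (g : Strat N T X A) (t : ℕ) (x : Fin T → ∀ i, X i) (a : Fin T → ∀ i, A i) : ℝ :=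
  xaMarg N T X A Q1 Qk g t x a / aMarg N T X A Q1 Qk g t a

/-- Probability of `(x_{1:t}^i, a_{1:t-1})` for a single player `i`. -/
def xiMarg (g : Strat N T X A) (i : Fin N) (t : ℕ) (xi : Fin T → X i)
    (a : Fin T → ∀ i, A i) : ℝ :=
  ∑ x' : Fin T → ∀ i, X i, ∑ a' : Fin T → ∀ i, A i,
    if (∀ s : Fin T, (s : ℕ) + 1 < t → a' s = a s) ∧ (∀ s : Fin T, (s : ℕ) < t → x' s i = xi s)
    then trajP N T X A Q1 Qk g x' a' else 0

/-- Player-`i` marginal conditional `P^g(x_{1:t}^i | a_{1:t-1})`. -/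
def condI (g : Strat N T X A) (i : Fin N) (t : ℕ) (xi : Fin T → X i)
    (a : Fin T → ∀ i, A i) : ℝ :=
  xiMarg N T X A Q1 Qk g i t xi a / aMarg N T X A Q1 Qk g t a



section Aux

lemma sum_fun_update_eq {κ β : Type*} [Fintype κ] [DecidableEq κ] [Fintype β]
    (u : κ) (F G : (κ → β) → ℝ)
    (h : ∀ f : κ → β, ∑ b : β, F (Function.update f u b) = ∑ b : β, G (Function.update f u b)) :
    ∑ f : κ → β, F f = ∑ f : κ → β, G f := by
  classical
  rw [← Equiv.sum_comp (Equiv.funSplitAt u β).symm F,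
      ← Equiv.sum_comp (Equiv.funSplitAt u β).symm G,
      Fintype.sum_prod_type, Fintype.sum_prod_type, Finset.sum_comm]
  nth_rewrite 2 [Finset.sum_comm]
  apply Finset.sum_congr rfl
  intro rest _
  rcases isEmpty_or_nonempty β with hβ | hβ
  · rw [Finset.univ_eq_empty (α := β), Finset.sum_empty, Finset.sum_empty]
  · obtain ⟨f0, hf0⟩ : ∃ f0, f0 = (Equiv.funSplitAt u β).symm (Classical.arbitrary β, rest) :=
      ⟨_, rfl⟩
    have key : ∀ b : β, (Equiv.funSplitAt u β).symm (b, rest) = Function.update f0 u b := by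
      subst hf0
      intro b; funext k
      by_cases hk : k = u
      · subst hk
        rw [Function.update_self, Equiv.funSplitAt_symm_apply, dif_pos rfl]
      · rw [Function.update_of_ne hk, Equiv.funSplitAt_symm_apply,
          Equiv.funSplitAt_symm_apply, dif_neg hk, dif_neg hk]
    have e1 : ∑ b : β, F ((Equiv.funSplitAt u β).symm (b, rest))
        = ∑ b : β, F (Function.update f0 u b) :=
      Finset.sum_congr rfl fun b _ => by rw [key b]
    have e2 : ∑ b : β, G ((Equiv.funSplitAt u β).symm (b, rest))
        = ∑ b : β, G (Function.update f0 u b) :=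
      Finset.sum_congr rfl fun b _ => by rw [key b]
    rw [e1, e2]
    exact h f0

lemma sum_pi_prod_one {ι : Type*} [Fintype ι] [DecidableEq ι] {β : ι → Type*}
    [∀ i, Fintype (β i)] (w : ∀ i, β i → ℝ) (hw : ∀ i, ∑ c, w i c = 1) :
    ∑ b : ∀ i, β i, ∏ i, w i (b i) = 1 := by
  rw [← Fintype.prod_sum]
  simp [hw]

lemma ind_eq_prod_ind {ι : Type*} [Fintype ι] {γ : ι → Type*} (x y : ∀ i, γ i) :
    (if x = y then (1:ℝ) else 0) = ∏ i, if x i = y i then (1:ℝ) else 0 := by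
  by_cases h : x = y
  · subst h; simp
  · rw [if_neg h]
    obtain ⟨i, hi⟩ : ∃ i, x i ≠ y i := by
      by_contra hc
      push_neg at hc
      exact h (funext hc)
    exact (Finset.prod_eq_zero (Finset.mem_univ i) (by rw [if_neg hi])).symm


end Aux

/-! ### Auxiliary machinery for the proof of Statement 19 -/

/-- Hybrid trajectory weight: genuine strategy factors for times `s < uG`, genuine kernel
factors for transitions out of times `s < uQ`; at later times these are replaced by
indicators pinning the action to `ab` and the type to the initial type. -/
def M2 (g : Strat N T X A) (ab : Fin T → ∀ i, A i) (h0 : 0 < T) (uG uQ : ℕ)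
    (x : Fin T → ∀ i, X i) (a' : Fin T → ∀ i, A i) : ℝ :=
  (∏ i, Q1 i (x ⟨0, h0⟩ i)) *
  ∏ s : Fin T,
    ((if (s : ℕ) < uG then ∏ i, g i s a' (fun n => x n i) (a' s i)
      else if a' s = ab s then 1 else 0) *
     (if h : (s : ℕ) + 1 < T then
        (if (s : ℕ) < uQ then ∏ i, Qk i ⟨(s : ℕ) + 1, h⟩ (x s i) (a' s) (x ⟨(s : ℕ) + 1, h⟩ i)
         else if x ⟨(s : ℕ) + 1, h⟩ = x ⟨0, h0⟩ then 1 else 0)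
      else 1))

/-- Indicator that `a'` agrees with `ab` strictly before time `r`. -/
def indCa (ab : Fin T → ∀ i, A i) (r : ℕ) (a' : Fin T → ∀ i, A i) : ℝ :=
  if (∀ s : Fin T, (s : ℕ) < r → a' s = ab s) then 1 else 0

/-- One-player factor of the collapsed trajectory weight. -/
def fP (ab : Fin T → ∀ i, A i) (h0 : 0 < T) (r : ℕ) (i : Fin N)
    (gi : Fin T → (Fin T → ∀ j, A j) → (Fin T → X i) → A i → ℝ) (xi : Fin T → X i) : ℝ :=
  Q1 i (xi ⟨0, h0⟩) *
  ∏ s : Fin T,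
    ((if (s : ℕ) < r then gi s ab xi (ab s i) else 1) *
     (if h : (s : ℕ) + 1 < T then
        (if (s : ℕ) < r then Qk i ⟨(s : ℕ) + 1, h⟩ (xi s) (ab s) (xi ⟨(s : ℕ) + 1, h⟩)
         else if xi ⟨(s : ℕ) + 1, h⟩ = xi ⟨0, h0⟩ then 1 else 0)
      else 1))

/-- The contribution of the players other than `j`. -/
def Rrest (ab : Fin T → ∀ i, A i) (h0 : 0 < T) (r : ℕ) (j : Fin N) (g : Strat N T X A) : ℝ :=
  ∑ rest : ∀ i : { i // i ≠ j }, Fin T → X i.1,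
    ∏ i : { i // i ≠ j }, fP N T X A Q1 Qk ab h0 r i.1 (g i.1) (rest i)

lemma M2_T_eq (g : Strat N T X A) (ab : Fin T → ∀ i, A i) (h0 : 0 < T)
    (x : Fin T → ∀ i, X i) (a' : Fin T → ∀ i, A i) :
    M2 N T X A Q1 Qk g ab h0 T T x a' = trajP N T X A Q1 Qk g x a' := by
  unfold M2 trajP
  rw [dif_pos h0]
  congr 1
  apply Finset.prod_congr rfl
  intro s _
  rw [if_pos s.isLt]
  congr 1
  by_cases h1 : (s : ℕ) + 1 < T
  · rw [dif_pos h1, if_pos s.isLt]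
    refine (Finset.prod_congr rfl fun i _ => ?_).symm
    exact dif_pos h1
  · rw [dif_neg h1]
    symm
    exact Finset.prod_eq_one fun i _ => dif_neg h1

lemma stepQ (g : Strat N T X A) (hgc : Causal N T X A g) (hK : StochKer N T X A Q1 Qk)
    (ab : Fin T → ∀ i, A i) (h0 : 0 < T) (r : ℕ)
    (C : (Fin T → ∀ i, X i) → ℝ)
    (hC : ∀ x (c : Fin T) y, r < (c : ℕ) → C (Function.update x c y) = C x)
    (u : ℕ) (hru : r ≤ u) (huT : u < T) (a' : Fin T → ∀ i, A i) :
    ∑ x : Fin T → ∀ i, X i, C x * M2 N T X A Q1 Qk g ab h0 (u + 1) (u + 1) x a'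
      = ∑ x : Fin T → ∀ i, X i, C x * M2 N T X A Q1 Qk g ab h0 (u + 1) u x a' := by
  by_cases hT : u + 1 < T
  case neg =>
    apply Finset.sum_congr rfl
    intro x _
    congr 1
    unfold M2
    congr 1
    apply Finset.prod_congr rfl
    intro s _
    congr 1
    by_cases h1 : (s : ℕ) + 1 < T
    · rw [dif_pos h1, dif_pos h1, if_pos (by omega), if_pos (by omega)]
    · rw [dif_neg h1, dif_neg h1]
  case pos =>
    apply sum_fun_update_eq (⟨u + 1, hT⟩ : Fin T)
    intro x
    have hne : ∀ (n : Fin T), (n : ℕ) ≠ u + 1 → ∀ y,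
        Function.update x (⟨u + 1, hT⟩ : Fin T) y n = x n :=
      fun n hn y => Function.update_of_ne (Fin.ne_of_val_ne hn) _ _
    obtain ⟨E, hE⟩ : ∃ E : ℝ, E = C x * ((∏ i, Q1 i (x ⟨0, h0⟩ i)) *
        ((∏ i, g i ⟨u, huT⟩ a' (fun n => x n i) (a' ⟨u, huT⟩ i)) *
          ∏ s ∈ Finset.univ.erase (⟨u, huT⟩ : Fin T),
            ((if (s : ℕ) < u + 1 then ∏ i, g i s a' (fun n => x n i) (a' s i)
              else if a' s = ab s then 1 else 0) *
             (if h : (s : ℕ) + 1 < T then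
                (if (s : ℕ) < u then
                  ∏ i, Qk i ⟨(s : ℕ) + 1, h⟩ (x s i) (a' s) (x ⟨(s : ℕ) + 1, h⟩ i)
                 else if x ⟨(s : ℕ) + 1, h⟩ = x ⟨0, h0⟩ then 1 else 0)
              else 1)))) := ⟨_, rfl⟩
    have main : ∀ (uQ : ℕ), u ≤ uQ → uQ ≤ u + 1 → ∀ y : ∀ i, X i,
        C (Function.update x (⟨u + 1, hT⟩ : Fin T) y) *
          M2 N T X A Q1 Qk g ab h0 (u + 1) uQ (Function.update x (⟨u + 1, hT⟩ : Fin T) y) a'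
        = E * (if u < uQ then
              ∏ i, Qk i ⟨u + 1, hT⟩ (x ⟨u, huT⟩ i) (a' ⟨u, huT⟩) (y i)
            else if y = x ⟨0, h0⟩ then 1 else 0) := by
      intro uQ h1 h2 y
      unfold M2
      rw [← Finset.mul_prod_erase _ _ (Finset.mem_univ (⟨u, huT⟩ : Fin T))]
      rw [show ((⟨u, huT⟩ : Fin T) : ℕ) = u from rfl]
      rw [hC x ⟨u + 1, hT⟩ y (show r < u + 1 by omega)]
      rw [dif_pos hT, if_pos (Nat.lt_succ_self u)]
      rw [Function.update_self]
      rw [hne ⟨u, huT⟩ (show u ≠ u + 1 by omega) y, hne ⟨0, h0⟩ (show (0:ℕ) ≠ u + 1 by omega) y]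
      have hG : (∏ i, g i ⟨u, huT⟩ a' (fun n => Function.update x (⟨u + 1, hT⟩ : Fin T) y n i)
            (a' ⟨u, huT⟩ i))
          = ∏ i, g i ⟨u, huT⟩ a' (fun n => x n i) (a' ⟨u, huT⟩ i) := by
        refine Finset.prod_congr rfl fun i _ => ?_
        refine congrFun (hgc i ⟨u, huT⟩ a' a' _ _ (fun n _ => rfl) (fun n hn => ?_)) _
        have hn' : (n : ℕ) ≤ u := hn
        rw [hne n (by omega) y]
      rw [hG]
      have hErase : (∏ s ∈ Finset.univ.erase (⟨u, huT⟩ : Fin T),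
            ((if (s : ℕ) < u + 1 then
                ∏ i, g i s a' (fun n => Function.update x (⟨u + 1, hT⟩ : Fin T) y n i) (a' s i)
              else if a' s = ab s then 1 else 0) *
             (if h : (s : ℕ) + 1 < T then
                (if (s : ℕ) < uQ then
                  ∏ i, Qk i ⟨(s : ℕ) + 1, h⟩
                    (Function.update x (⟨u + 1, hT⟩ : Fin T) y s i) (a' s)
                    (Function.update x (⟨u + 1, hT⟩ : Fin T) y ⟨(s : ℕ) + 1, h⟩ i)
                 else if Function.update x (⟨u + 1, hT⟩ : Fin T) y ⟨(s : ℕ) + 1, h⟩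
                    = x ⟨0, h0⟩ then 1 else 0)
              else 1)))
          = ∏ s ∈ Finset.univ.erase (⟨u, huT⟩ : Fin T),
            ((if (s : ℕ) < u + 1 then ∏ i, g i s a' (fun n => x n i) (a' s i)
              else if a' s = ab s then 1 else 0) *
             (if h : (s : ℕ) + 1 < T then
                (if (s : ℕ) < u then
                  ∏ i, Qk i ⟨(s : ℕ) + 1, h⟩ (x s i) (a' s) (x ⟨(s : ℕ) + 1, h⟩ i)
                 else if x ⟨(s : ℕ) + 1, h⟩ = x ⟨0, h0⟩ then 1 else 0)
              else 1)) := by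
        refine Finset.prod_congr rfl fun s hs => ?_
        have hsu : (s : ℕ) ≠ u := fun h =>
          (Finset.mem_erase.1 hs).1 (Fin.val_injective h)
        congr 1
        · by_cases hg1 : (s : ℕ) < u + 1
          · rw [if_pos hg1, if_pos hg1]
            refine Finset.prod_congr rfl fun i _ => ?_
            refine congrFun (hgc i s a' a' _ _ (fun n _ => rfl) (fun n hn => ?_)) _
            have hn' : (n : ℕ) ≤ (s : ℕ) := hn
            rw [hne n (by omega) y]
          · rw [if_neg hg1, if_neg hg1]
        · by_cases hq : (s : ℕ) + 1 < T
          · rw [dif_pos hq, dif_pos hq]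
            by_cases h2' : (s : ℕ) < u
            · rw [if_pos (show (s : ℕ) < uQ by omega), if_pos h2']
              rw [hne s (by omega) y, hne ⟨(s : ℕ) + 1, hq⟩ (show (s : ℕ) + 1 ≠ u + 1 by omega) y]
            · rw [if_neg (show ¬ (s : ℕ) < uQ by omega), if_neg h2']
              rw [hne ⟨(s : ℕ) + 1, hq⟩ (show (s : ℕ) + 1 ≠ u + 1 by omega) y]
          · rw [dif_neg hq, dif_neg hq]
      rw [hErase, hE]
      ring
    calc
      ∑ y : ∀ i, X i, C (Function.update x (⟨u + 1, hT⟩ : Fin T) y) *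
          M2 N T X A Q1 Qk g ab h0 (u + 1) (u + 1) (Function.update x (⟨u + 1, hT⟩ : Fin T) y) a'
        = ∑ y : ∀ i, X i, E * ∏ i, Qk i ⟨u + 1, hT⟩ (x ⟨u, huT⟩ i) (a' ⟨u, huT⟩) (y i) := by
          refine Finset.sum_congr rfl fun y _ => ?_
          rw [main (u + 1) (by omega) le_rfl y, if_pos (Nat.lt_succ_self u)]
      _ = E := by
          rw [← Finset.mul_sum,
            sum_pi_prod_one _ (fun i => (hK.2 i ⟨u + 1, hT⟩ (x ⟨u, huT⟩ i) (a' ⟨u, huT⟩)).2),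
            mul_one]
      _ = ∑ y : ∀ i, X i, E * (if y = x ⟨0, h0⟩ then 1 else 0) := by
          rw [← Finset.mul_sum]
          have : ∑ y : ∀ i, X i, (if y = x ⟨0, h0⟩ then (1 : ℝ) else 0) = 1 := by simp
          rw [this, mul_one]
      _ = ∑ y : ∀ i, X i, C (Function.update x (⟨u + 1, hT⟩ : Fin T) y) *
          M2 N T X A Q1 Qk g ab h0 (u + 1) u (Function.update x (⟨u + 1, hT⟩ : Fin T) y) a' := by
          refine Finset.sum_congr rfl fun y _ => ?_
          rw [main u le_rfl (by omega) y, if_neg (lt_irrefl u)]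

lemma stepG (g : Strat N T X A) (hg : Stochastic N T X A g) (hgc : Causal N T X A g)
    (ab : Fin T → ∀ i, A i) (h0 : 0 < T) (r : ℕ)
    (u : ℕ) (hru : r ≤ u) (huT : u < T) (x : Fin T → ∀ i, X i) :
    ∑ a' : Fin T → ∀ i, A i, indCa N T A ab r a' * M2 N T X A Q1 Qk g ab h0 (u + 1) u x a'
      = ∑ a' : Fin T → ∀ i, A i, indCa N T A ab r a' * M2 N T X A Q1 Qk g ab h0 u u x a' := by
  apply sum_fun_update_eq (⟨u, huT⟩ : Fin T)
  intro a'
  have hne : ∀ (n : Fin T), (n : ℕ) ≠ u → ∀ b,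
      Function.update a' (⟨u, huT⟩ : Fin T) b n = a' n :=
    fun n hn b => Function.update_of_ne (Fin.ne_of_val_ne hn) _ _
  have hCa : ∀ b, indCa N T A ab r (Function.update a' (⟨u, huT⟩ : Fin T) b)
      = indCa N T A ab r a' := by
    intro b
    unfold indCa
    refine if_congr (forall_congr' fun s => imp_congr_right fun hs => ?_) rfl rfl
    rw [hne s (by omega) b]
  obtain ⟨E, hE⟩ : ∃ E : ℝ, E = indCa N T A ab r a' * ((∏ i, Q1 i (x ⟨0, h0⟩ i)) *
      ((if h : u + 1 < T then
          (if x ⟨u + 1, h⟩ = x ⟨0, h0⟩ then 1 else 0) else 1) *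
        ∏ s ∈ Finset.univ.erase (⟨u, huT⟩ : Fin T),
          ((if (s : ℕ) < u then ∏ i, g i s a' (fun n => x n i) (a' s i)
            else if a' s = ab s then 1 else 0) *
           (if h : (s : ℕ) + 1 < T then
              (if (s : ℕ) < u then
                ∏ i, Qk i ⟨(s : ℕ) + 1, h⟩ (x s i) (a' s) (x ⟨(s : ℕ) + 1, h⟩ i)
               else if x ⟨(s : ℕ) + 1, h⟩ = x ⟨0, h0⟩ then 1 else 0)
            else 1)))) := ⟨_, rfl⟩
  have main : ∀ (uG : ℕ), u ≤ uG → uG ≤ u + 1 → ∀ b : ∀ i, A i,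
      indCa N T A ab r (Function.update a' (⟨u, huT⟩ : Fin T) b) *
        M2 N T X A Q1 Qk g ab h0 uG u x (Function.update a' (⟨u, huT⟩ : Fin T) b)
      = E * (if u < uG then
            ∏ i, g i ⟨u, huT⟩ a' (fun n => x n i) (b i)
          else if b = ab ⟨u, huT⟩ then 1 else 0) := by
    intro uG h1 h2 b
    unfold M2
    rw [← Finset.mul_prod_erase _ _ (Finset.mem_univ (⟨u, huT⟩ : Fin T))]
    rw [show ((⟨u, huT⟩ : Fin T) : ℕ) = u from rfl]
    rw [hCa b, Function.update_self]
    have hQu : (if h : u + 1 < T then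
          (if u < u then
            ∏ i, Qk i ⟨u + 1, h⟩ (x ⟨u, huT⟩ i) b (x ⟨u + 1, h⟩ i)
           else if x ⟨u + 1, h⟩ = x ⟨0, h0⟩ then 1 else 0)
        else 1)
        = (if h : u + 1 < T then (if x ⟨u + 1, h⟩ = x ⟨0, h0⟩ then (1:ℝ) else 0) else 1) := by
      by_cases hq : u + 1 < T
      · rw [dif_pos hq, dif_pos hq, if_neg (lt_irrefl u)]
      · rw [dif_neg hq, dif_neg hq]
    rw [hQu]
    have hGu : (if u < uG then
          ∏ i, g i ⟨u, huT⟩ (Function.update a' (⟨u, huT⟩ : Fin T) b) (fun n => x n i) (b i)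
        else if b = ab ⟨u, huT⟩ then (1:ℝ) else 0)
        = (if u < uG then
          ∏ i, g i ⟨u, huT⟩ a' (fun n => x n i) (b i)
        else if b = ab ⟨u, huT⟩ then 1 else 0) := by
      by_cases hg1 : u < uG
      · rw [if_pos hg1, if_pos hg1]
        refine Finset.prod_congr rfl fun i _ => ?_
        refine congrFun (hgc i ⟨u, huT⟩ _ a' _ _ (fun n hn => ?_) (fun n _ => rfl)) _
        have hn' : (n : ℕ) < u := hn
        rw [hne n (by omega) b]
      · rw [if_neg hg1, if_neg hg1]
    rw [hGu]
    have hErase : (∏ s ∈ Finset.univ.erase (⟨u, huT⟩ : Fin T),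
          ((if (s : ℕ) < uG then
              ∏ i, g i s (Function.update a' (⟨u, huT⟩ : Fin T) b) (fun n => x n i)
                (Function.update a' (⟨u, huT⟩ : Fin T) b s i)
            else if Function.update a' (⟨u, huT⟩ : Fin T) b s = ab s then 1 else 0) *
           (if h : (s : ℕ) + 1 < T then
              (if (s : ℕ) < u then
                ∏ i, Qk i ⟨(s : ℕ) + 1, h⟩ (x s i)
                  (Function.update a' (⟨u, huT⟩ : Fin T) b s) (x ⟨(s : ℕ) + 1, h⟩ i)
               else if x ⟨(s : ℕ) + 1, h⟩ = x ⟨0, h0⟩ then 1 else 0)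
            else 1)))
        = ∏ s ∈ Finset.univ.erase (⟨u, huT⟩ : Fin T),
          ((if (s : ℕ) < u then ∏ i, g i s a' (fun n => x n i) (a' s i)
            else if a' s = ab s then 1 else 0) *
           (if h : (s : ℕ) + 1 < T then
              (if (s : ℕ) < u then
                ∏ i, Qk i ⟨(s : ℕ) + 1, h⟩ (x s i) (a' s) (x ⟨(s : ℕ) + 1, h⟩ i)
               else if x ⟨(s : ℕ) + 1, h⟩ = x ⟨0, h0⟩ then 1 else 0)
            else 1)) := by
      refine Finset.prod_congr rfl fun s hs => ?_
      have hsu : (s : ℕ) ≠ u := fun h =>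
        (Finset.mem_erase.1 hs).1 (Fin.val_injective h)
      congr 1
      · by_cases hg1 : (s : ℕ) < u
        · rw [if_pos (show (s : ℕ) < uG by omega), if_pos hg1, hne s (by omega) b]
          refine Finset.prod_congr rfl fun i _ => ?_
          refine congrFun (hgc i s _ a' _ _ (fun n hn => ?_) (fun n _ => rfl)) _
          have hn' : (n : ℕ) < (s : ℕ) := hn
          rw [hne n (by omega) b]
        · rw [if_neg (show ¬ (s : ℕ) < uG by omega), if_neg hg1, hne s (by omega) b]
      · by_cases hq : (s : ℕ) + 1 < T
        · rw [dif_pos hq, dif_pos hq]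
          by_cases h2' : (s : ℕ) < u
          · rw [if_pos h2', if_pos h2', hne s (by omega) b]
          · rw [if_neg h2', if_neg h2']
        · rw [dif_neg hq, dif_neg hq]
    rw [hErase, hE]
    ring
  calc
    ∑ b : ∀ i, A i, indCa N T A ab r (Function.update a' (⟨u, huT⟩ : Fin T) b) *
        M2 N T X A Q1 Qk g ab h0 (u + 1) u x (Function.update a' (⟨u, huT⟩ : Fin T) b)
      = ∑ b : ∀ i, A i, E * ∏ i, g i ⟨u, huT⟩ a' (fun n => x n i) (b i) := by
        refine Finset.sum_congr rfl fun b _ => ?_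
        rw [main (u + 1) (by omega) le_rfl b, if_pos (Nat.lt_succ_self u)]
    _ = E := by
        rw [← Finset.mul_sum,
          sum_pi_prod_one _ (fun i => (hg i ⟨u, huT⟩ a' (fun n => x n i)).2), mul_one]
    _ = ∑ b : ∀ i, A i, E * (if b = ab ⟨u, huT⟩ then 1 else 0) := by
        rw [← Finset.mul_sum]
        have : ∑ b : ∀ i, A i, (if b = ab ⟨u, huT⟩ then (1 : ℝ) else 0) = 1 := by simp
        rw [this, mul_one]
    _ = ∑ b : ∀ i, A i, indCa N T A ab r (Function.update a' (⟨u, huT⟩ : Fin T) b) *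
        M2 N T X A Q1 Qk g ab h0 u u x (Function.update a' (⟨u, huT⟩ : Fin T) b) := by
        refine Finset.sum_congr rfl fun b _ => ?_
        rw [main u le_rfl (by omega) b, if_neg (lt_irrefl u)]

lemma chain (g : Strat N T X A) (hg : Stochastic N T X A g) (hgc : Causal N T X A g)
    (hK : StochKer N T X A Q1 Qk)
    (ab : Fin T → ∀ i, A i) (h0 : 0 < T) (r : ℕ)
    (C : (Fin T → ∀ i, X i) → ℝ)
    (hC : ∀ x (c : Fin T) y, r < (c : ℕ) → C (Function.update x c y) = C x) :
    ∀ d u, r ≤ u → u + d = T →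
    (∑ x : Fin T → ∀ i, X i, ∑ a' : Fin T → ∀ i, A i,
        C x * (indCa N T A ab r a' * M2 N T X A Q1 Qk g ab h0 T T x a'))
      = ∑ x : Fin T → ∀ i, X i, ∑ a' : Fin T → ∀ i, A i,
        C x * (indCa N T A ab r a' * M2 N T X A Q1 Qk g ab h0 u u x a') := by
  intro d
  induction d with
  | zero =>
    intro u hru hd
    obtain rfl : u = T := by omega
    rfl
  | succ d ih =>
    intro u hru hd
    have huT : u < T := by omega
    rw [ih (u + 1) (by omega) (by omega)]
    have step1 : (∑ x : Fin T → ∀ i, X i, ∑ a' : Fin T → ∀ i, A i,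
          C x * (indCa N T A ab r a' * M2 N T X A Q1 Qk g ab h0 (u + 1) (u + 1) x a'))
        = ∑ x : Fin T → ∀ i, X i, ∑ a' : Fin T → ∀ i, A i,
          C x * (indCa N T A ab r a' * M2 N T X A Q1 Qk g ab h0 (u + 1) u x a') := by
      rw [Finset.sum_comm]
      conv_rhs => rw [Finset.sum_comm]
      refine Finset.sum_congr rfl fun a' _ => ?_
      have e1 := stepQ N T X A Q1 Qk g hgc hK ab h0 r
        (fun x => C x * indCa N T A ab r a')
        (fun x c y hc => by rw [hC x c y hc]) u hru huT a'
      simp only [mul_assoc] at e1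
      exact e1
    rw [step1]
    refine Finset.sum_congr rfl fun x _ => ?_
    rw [← Finset.mul_sum, ← Finset.mul_sum,
      stepG N T X A Q1 Qk g hg hgc ab h0 r u hru huT x]

lemma collapse (g : Strat N T X A) (ab : Fin T → ∀ i, A i) (h0 : 0 < T) (r : ℕ)
    (x : Fin T → ∀ i, X i) :
    ∑ a' : Fin T → ∀ i, A i, indCa N T A ab r a' * M2 N T X A Q1 Qk g ab h0 r r x a'
      = ∏ i, fP N T X A Q1 Qk ab h0 r i (g i) (fun s => x s i) := by
  have hzero : ∀ a' : Fin T → ∀ i, A i, a' ≠ ab →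
      indCa N T A ab r a' * M2 N T X A Q1 Qk g ab h0 r r x a' = 0 := by
    intro a' hna
    by_cases hca : ∀ s : Fin T, (s : ℕ) < r → a' s = ab s
    · obtain ⟨s0, hs0⟩ : ∃ s0, a' s0 ≠ ab s0 := by
        by_contra hcon
        push_neg at hcon
        exact hna (funext hcon)
      have hs0r : ¬ (s0 : ℕ) < r := fun h => hs0 (hca s0 h)
      unfold M2
      rw [Finset.prod_eq_zero (Finset.mem_univ s0)
        (by rw [if_neg hs0r, if_neg hs0, zero_mul]), mul_zero, mul_zero]
    · unfold indCa
      rw [if_neg hca, zero_mul]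
  rw [Finset.sum_eq_single_of_mem ab (Finset.mem_univ _) (fun a' _ h => hzero a' h)]
  unfold indCa
  rw [if_pos (fun s _ => rfl), one_mul]
  unfold M2 fP
  conv_rhs => rw [Finset.prod_mul_distrib]
  rw [Finset.prod_comm (s := (Finset.univ : Finset (Fin N)))]
  congr 1
  refine Finset.prod_congr rfl fun s _ => ?_
  rw [Finset.prod_mul_distrib]
  congr 1
  · by_cases hs : (s : ℕ) < r
    · rw [if_pos hs]
      refine (Finset.prod_congr rfl fun i _ => ?_).symm
      exact if_pos hs
    · simp [hs]
  · by_cases hq : (s : ℕ) + 1 < T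
    · rw [dif_pos hq]
      by_cases hs : (s : ℕ) < r
      · rw [if_pos hs]
        exact Finset.prod_congr rfl fun i _ => by rw [dif_pos hq, if_pos hs]
      · rw [if_neg hs]
        rw [ind_eq_prod_ind (x ⟨(s : ℕ) + 1, hq⟩) (x ⟨0, h0⟩)]
        exact Finset.prod_congr rfl fun i _ => by rw [dif_pos hq, if_neg hs]
    · simp [hq]

lemma sum_split (j : Fin N) (φ : ∀ i, (Fin T → X i) → ℝ) (ψ : (Fin T → X j) → ℝ) :
    ∑ x : Fin T → ∀ i, X i, ψ (fun s => x s j) * ∏ i, φ i (fun s => x s i)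
      = (∑ xj' : Fin T → X j, ψ xj' * φ j xj') *
        ∑ rest : ∀ i : { i // i ≠ j }, Fin T → X i.1,
          ∏ i : { i // i ≠ j }, φ i.1 (rest i) := by
  classical
  have h1 : ∑ x : Fin T → ∀ i, X i, ψ (fun s => x s j) * ∏ i, φ i (fun s => x s i)
      = ∑ h : ∀ i, Fin T → X i, ψ (h j) * ∏ i, φ i (h i) :=
    (Fintype.sum_bijective _ (Equiv.piComm fun (i : Fin N) (_ : Fin T) => X i).bijective
      (fun h : ∀ i, Fin T → X i => ψ (h j) * ∏ i, φ i (h i))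
      (fun x : Fin T → ∀ i, X i => ψ (fun s => x s j) * ∏ i, φ i (fun s => x s i))
      (fun h => rfl)).symm
  rw [h1]
  rw [← Equiv.sum_comp (Equiv.piSplitAt j (fun i => Fin T → X i)).symm
      (fun h => ψ (h j) * ∏ i, φ i (h i)), Fintype.sum_prod_type]
  rw [Finset.sum_mul_sum]
  refine Finset.sum_congr rfl fun b _ => ?_
  refine Finset.sum_congr rfl fun rest _ => ?_
  have hj : (Equiv.piSplitAt j (fun i => Fin T → X i)).symm (b, rest) j = b := by
    simp [Equiv.piSplitAt_symm_apply]
  have hioff : ∀ (i : Fin N) (hi : i ≠ j),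
      (Equiv.piSplitAt j (fun i => Fin T → X i)).symm (b, rest) i = rest ⟨i, hi⟩ := by
    intro i hi
    simp [Equiv.piSplitAt_symm_apply, hi]
  rw [← Finset.mul_prod_erase _ _ (Finset.mem_univ j), hj]
  have hprod : (∏ i ∈ Finset.univ.erase j,
        φ i ((Equiv.piSplitAt j (fun i => Fin T → X i)).symm (b, rest) i))
      = ∏ i : { i // i ≠ j }, φ i.1 (rest i) := by
    rw [Finset.prod_subtype (Finset.univ.erase j)
      (p := fun i => i ≠ j) (by simp) 
      (fun i => φ i ((Equiv.piSplitAt j (fun i => Fin T → X i)).symm (b, rest) i))]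
    exact Finset.prod_congr rfl fun i _ => by rw [hioff i.1 i.2]
  rw [hprod]
  ring

lemma xiMarg_repr (g : Strat N T X A) (hg : Stochastic N T X A g) (hgc : Causal N T X A g)
    (hK : StochKer N T X A Q1 Qk) (j : Fin N) (r : ℕ) (hrT : r < T) (h0 : 0 < T)
    (xj : Fin T → X j) (ab : Fin T → ∀ i, A i) :
    xiMarg N T X A Q1 Qk g j (r + 1) xj ab
      = (∑ xj' : Fin T → X j,
          (if (∀ s : Fin T, (s : ℕ) < r + 1 → xj' s = xj s) then (1:ℝ) else 0) *
            fP N T X A Q1 Qk ab h0 r j (g j) xj') *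
        Rrest N T X A Q1 Qk ab h0 r j g := by
  unfold xiMarg
  have e0 : ∀ (x' : Fin T → ∀ i, X i) (a' : Fin T → ∀ i, A i),
      (if (∀ s : Fin T, (s : ℕ) + 1 < r + 1 → a' s = ab s) ∧
          (∀ s : Fin T, (s : ℕ) < r + 1 → x' s j = xj s)
        then trajP N T X A Q1 Qk g x' a' else 0)
      = (if (∀ s : Fin T, (s : ℕ) < r + 1 → x' s j = xj s) then (1:ℝ) else 0) *
          (indCa N T A ab r a' * M2 N T X A Q1 Qk g ab h0 T T x' a') := by
    intro x' a'
    rw [M2_T_eq N T X A Q1 Qk g ab h0 x' a']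
    unfold indCa
    have hiff : (∀ s : Fin T, (s : ℕ) < r → a' s = ab s) ↔
        (∀ s : Fin T, (s : ℕ) + 1 < r + 1 → a' s = ab s) := by
      constructor <;> intro H s hs <;> exact H s (by omega)
    by_cases h1 : ∀ s : Fin T, (s : ℕ) + 1 < r + 1 → a' s = ab s
    · by_cases h2 : ∀ s : Fin T, (s : ℕ) < r + 1 → x' s j = xj s
      · rw [if_pos ⟨h1, h2⟩, if_pos h2, if_pos (hiff.2 h1), one_mul, one_mul]
      · rw [if_neg (fun hc => h2 hc.2), if_neg h2, zero_mul]
    · rw [if_neg (fun hc => h1 hc.1), if_neg (fun hc => h1 (hiff.1 hc)), zero_mul, mul_zero]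
  simp_rw [e0]
  rw [chain N T X A Q1 Qk g hg hgc hK ab h0 r
      (fun x' => if (∀ s : Fin T, (s : ℕ) < r + 1 → x' s j = xj s) then (1:ℝ) else 0)
      (fun x c y hc => by
        refine if_congr (forall_congr' fun s => imp_congr_right fun hs => ?_) rfl rfl
        rw [Function.update_of_ne (Fin.ne_of_val_ne (show (s : ℕ) ≠ (c : ℕ) by omega))])
      (T - r) r le_rfl (by omega)]
  have e1 : ∀ x' : Fin T → ∀ i, X i,
      (∑ a' : Fin T → ∀ i, A i,
        (if (∀ s : Fin T, (s : ℕ) < r + 1 → x' s j = xj s) then (1:ℝ) else 0) *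
          (indCa N T A ab r a' * M2 N T X A Q1 Qk g ab h0 r r x' a'))
      = (if (∀ s : Fin T, (s : ℕ) < r + 1 → x' s j = xj s) then (1:ℝ) else 0) *
          ∏ i, fP N T X A Q1 Qk ab h0 r i (g i) (fun s => x' s i) := by
    intro x'
    rw [← Finset.mul_sum, collapse N T X A Q1 Qk g ab h0 r x']
  rw [Finset.sum_congr rfl fun x' _ => e1 x']
  exact sum_split N T X j (fun i => fP N T X A Q1 Qk ab h0 r i (g i))
    (fun xc => if (∀ s : Fin T, (s : ℕ) < r + 1 → xc s = xj s) then (1:ℝ) else 0)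

lemma aMarg_repr (g : Strat N T X A) (hg : Stochastic N T X A g) (hgc : Causal N T X A g)
    (hK : StochKer N T X A Q1 Qk) (j : Fin N) (r : ℕ) (hrT : r < T) (h0 : 0 < T)
    (ab : Fin T → ∀ i, A i) :
    aMarg N T X A Q1 Qk g (r + 1) ab
      = (∑ xj' : Fin T → X j, fP N T X A Q1 Qk ab h0 r j (g j) xj') *
        Rrest N T X A Q1 Qk ab h0 r j g := by
  unfold aMarg
  have e0 : ∀ (x' : Fin T → ∀ i, X i) (a' : Fin T → ∀ i, A i),
      (if (∀ s : Fin T, (s : ℕ) + 1 < r + 1 → a' s = ab s)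
        then trajP N T X A Q1 Qk g x' a' else 0)
      = (1:ℝ) * (indCa N T A ab r a' * M2 N T X A Q1 Qk g ab h0 T T x' a') := by
    intro x' a'
    rw [M2_T_eq N T X A Q1 Qk g ab h0 x' a', one_mul]
    unfold indCa
    have hiff : (∀ s : Fin T, (s : ℕ) < r → a' s = ab s) ↔
        (∀ s : Fin T, (s : ℕ) + 1 < r + 1 → a' s = ab s) := by
      constructor <;> intro H s hs <;> exact H s (by omega)
    by_cases h1 : ∀ s : Fin T, (s : ℕ) + 1 < r + 1 → a' s = ab s
    · rw [if_pos h1, if_pos (hiff.2 h1), one_mul]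
    · rw [if_neg h1, if_neg (fun hc => h1 (hiff.1 hc)), zero_mul]
  simp_rw [e0]
  rw [chain N T X A Q1 Qk g hg hgc hK ab h0 r (fun _ => (1:ℝ))
      (fun _ _ _ _ => rfl) (T - r) r le_rfl (by omega)]
  have e1 : ∀ x' : Fin T → ∀ i, X i,
      (∑ a' : Fin T → ∀ i, A i,
        (1:ℝ) * (indCa N T A ab r a' * M2 N T X A Q1 Qk g ab h0 r r x' a'))
      = (1:ℝ) * ∏ i, fP N T X A Q1 Qk ab h0 r i (g i) (fun s => x' s i) := by
    intro x'
    rw [← Finset.mul_sum, collapse N T X A Q1 Qk g ab h0 r x']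
  rw [Finset.sum_congr rfl fun x' _ => e1 x']
  have hsp := sum_split N T X j (fun i => fP N T X A Q1 Qk ab h0 r i (g i))
    (fun _ : Fin T → X j => (1:ℝ))
  simp only [one_mul] at hsp ⊢
  exact hsp

/-- the marginal posterior of player `j`'s type history given the public
action history is unaffected by the other players' strategies. -/
theorem marginal_posterior_independent_of_others
    (g ghat : Strat N T X A) (j : Fin N)
    (hK : StochKer N T X A Q1 Qk)
    (hg : Stochastic N T X A g) (hgc : Causal N T X A g)
    (hh : Stochastic N T X A ghat) (hhc : Causal N T X A ghat)
    (hagree : g j = ghat j)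
    (t : ℕ) (ht : t ≤ T)
    (xj : Fin T → X j) (a : Fin T → ∀ i, A i)
    (hpos : 0 < aMarg N T X A Q1 Qk g t a)
    (hpos' : 0 < aMarg N T X A Q1 Qk ghat t a) :
    condI N T X A Q1 Qk g j t xj a = condI N T X A Q1 Qk ghat j t xj a := by
  by_cases ht0 : t = 0
  · subst ht0
    have hxa : ∀ gg : Strat N T X A,
        xiMarg N T X A Q1 Qk gg j 0 xj a = aMarg N T X A Q1 Qk gg 0 a := by
      intro gg
      unfold xiMarg aMarg
      refine Finset.sum_congr rfl fun x' _ => Finset.sum_congr rfl fun a' _ => ?_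
      rw [if_pos (fun s hs => absurd hs (by omega)),
          if_pos (⟨fun s hs => absurd hs (by omega), fun s hs => absurd hs (by omega)⟩ :
            (∀ s : Fin T, (s : ℕ) + 1 < 0 → a' s = a s) ∧
            (∀ s : Fin T, (s : ℕ) < 0 → x' s j = xj s))]
    unfold condI
    rw [hxa g, hxa ghat, div_self (ne_of_gt hpos), div_self (ne_of_gt hpos')]
  · obtain ⟨r, rfl⟩ : ∃ r, t = r + 1 := ⟨t - 1, by omega⟩
    have hrT : r < T := by omega
    have h0 : 0 < T := by omega
    unfold condI
    rw [xiMarg_repr N T X A Q1 Qk g hg hgc hK j r hrT h0 xj a,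
        aMarg_repr N T X A Q1 Qk g hg hgc hK j r hrT h0 a,
        xiMarg_repr N T X A Q1 Qk ghat hh hhc hK j r hrT h0 xj a,
        aMarg_repr N T X A Q1 Qk ghat hh hhc hK j r hrT h0 a,
        hagree]
    rw [aMarg_repr N T X A Q1 Qk g hg hgc hK j r hrT h0 a, hagree] at hpos
    rw [aMarg_repr N T X A Q1 Qk ghat hh hhc hK j r hrT h0 a] at hpos'
    rw [mul_div_mul_right _ _ (right_ne_zero_of_mul (ne_of_gt hpos)),
        mul_div_mul_right _ _ (right_ne_zero_of_mul (ne_of_gt hpos'))]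

end DynGame
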